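/- In a lexicographically ordered binary tree (A, <, <_s), for all x, y in A, x is simpler than y (x <_s y) if and only if every element simpler than x that is less than x is less than y, every element simpler than x that is greater than x is greater than y, and y ≠ x. -/
import Mathlib


/-! Lexicographically ordered binary trees, following Ehrlich.
`slt` is the "simpler than" tree order, `lt` the total order. -/

variable {A : Type*}

/-- `y` is an immediate successor of `x` in the tree order `slt`:
`x` is simpler than `y` and every element simpler than `y` is `x` or simpler than `x`. -/
def ImmSucc (slt : A → A → Prop) (x y : A) : Prop :=
  slt x y ∧ ∀ z, slt z y → z = x ∨ slt z x

/-- A chain with respect to the tree order. -/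
def IsSltChain (slt : A → A → Prop) (C : Set A) : Prop :=
  ∀ a ∈ C, ∀ b ∈ C, a = b ∨ slt a b ∨ slt b a

/-- A chain of limit length: a chain with no maximal element (this includes the empty chain). -/
def LimitChain (slt : A → A → Prop) (C : Set A) : Prop :=
  IsSltChain slt C ∧ ∀ a ∈ C, ∃ b ∈ C, slt a b

/-- `y` is an immediate successor of the chain `C`: every member of `C` is simpler than `y`,
and every element simpler than `y` lies below some member of `C`. -/
def ChainImmSucc (slt : A → A → Prop) (C : Set A) (y : A) : Prop :=
  (∀ a ∈ C, slt a y) ∧ ∀ z, slt z y → ∃ a ∈ C, z = a ∨ slt z a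

/-- A lexicographically ordered binary tree: `slt` is a tree partial order with well-ordered
sets of predecessors, `lt` is a strict total order, the lexicographic condition links the two,
and the tree is binary (each element has at most two immediate successors, each chain of
limit length has at most one immediate successor). -/
structure LexBinaryTree (slt lt : A → A → Prop) : Prop where
  slt_trans : ∀ {x y z : A}, slt x y → slt y z → slt x z
  slt_wf : WellFounded slt
  pred_linear : ∀ {a b x : A}, slt a x → slt b x → a = b ∨ slt a b ∨ slt b a
  lt_trans : ∀ {x y z : A}, lt x y → lt y z → lt x z
  lt_irrefl : ∀ x : A, ¬ lt x x
  lt_trichot : ∀ x y : A, lt x y ∨ x = y ∨ lt y x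
  lex : ∀ x y : A, (x ≠ y ∧ ¬ slt x y ∧ ¬ slt y x) ↔
      ∃ z, slt z x ∧ slt z y ∧ (lt x z ∧ lt z y ∨ lt y z ∧ lt z x)
  binary_succ : ∀ x y₁ y₂ y₃ : A, ImmSucc slt x y₁ → ImmSucc slt x y₂ → ImmSucc slt x y₃ →
      y₁ = y₂ ∨ y₁ = y₃ ∨ y₂ = y₃
  binary_limit : ∀ (C : Set A) (y₁ y₂ : A), LimitChain slt C →
      ChainImmSucc slt C y₁ → ChainImmSucc slt C y₂ → y₁ = y₂

/-- In a lexicographically ordered binary tree, `x <_s y` iff every left (`lt x`)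
predecessor of `x` is below `y`, every right predecessor of `x` is above `y`, and `y ≠ x`. -/
theorem simpler_iff_between_options {slt lt : A → A → Prop}
    (T : LexBinaryTree slt lt) (x y : A) :
    slt x y ↔ ((∀ a, slt a x → lt a x → lt a y) ∧ (∀ a, slt a x → lt x a → lt y a) ∧ y ≠ x) := by
  have hirr : ∀ z : A, ¬ slt z z := fun z => (T.slt_wf.isIrrefl).irrefl z
  constructor
  · intro hxy
    have hne : y ≠ x := fun h => hirr x (h ▸ hxy)
    have hnc : ¬ ∃ z, slt z x ∧ slt z y ∧ (lt x z ∧ lt z y ∨ lt y z ∧ lt z x) :=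
      fun h => ((T.lex x y).mpr h).2.1 hxy
    refine ⟨?_, ?_, hne⟩
    · intro a hax hlt
      have hay : slt a y := T.slt_trans hax hxy
      rcases T.lt_trichot a y with h | h | h
      · exact h
      · exact absurd (h ▸ hay) (hirr y)
      · exact absurd ⟨a, hax, hay, Or.inr ⟨h, hlt⟩⟩ hnc
    · intro a hax hlt
      have hay : slt a y := T.slt_trans hax hxy
      rcases T.lt_trichot y a with h | h | h
      · exact h
      · exact absurd (h ▸ hay) (hirr a)
      · exact absurd ⟨a, hax, hay, Or.inl ⟨hlt, h⟩⟩ hnc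
  · rintro ⟨hL, hR, hne⟩
    by_contra hxy
    have hyx : ¬ slt y x := by
      intro h
      rcases T.lt_trichot y x with hlt | heq | hlt
      · exact T.lt_irrefl y (hL y h hlt)
      · exact hne heq
      · exact T.lt_irrefl y (hR y h hlt)
    obtain ⟨z, hzx, hzy, hcase⟩ := (T.lex x y).mp ⟨fun h => hne h.symm, hxy, hyx⟩
    rcases hcase with ⟨h1, h2⟩ | ⟨h1, h2⟩
    · exact T.lt_irrefl z (T.lt_trans h2 (hR z hzx h1))
    · exact T.lt_irrefl z (T.lt_trans (hL z hzx h2) h1)
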